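/- Let f be a positive three-times differentiable function and v, β given. If f solves y''' + 4v̄·y' + 2v̄'·y + 6β·y·y' = 0 where v̄ = v − β·f, then ψ = √f satisfies (ψ''·ψ³ + v̄·ψ⁴ + β·ψ⁶)' = 0; hence there is a constant σ such that ψ'' + v̄·ψ + β·ψ³ = σ/ψ³. -/

import Mathlib

/-- If `f > 0` solves `y''' + 4 v̄ y' + 2 v̄' y + 6 β y y' = 0` with
`v̄ = v − β f`, then `ψ = √f` satisfies `(ψ'' ψ³ + v̄ ψ⁴ + β ψ⁶)' = 0`, hence
there is a constant `σ` with `ψ'' + v̄ ψ + β ψ³ = σ/ψ³` (Ermakov–Painlevé II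
type equation). -/
theorem ermakov_painleveII
    (β : ℝ) (v v' f f' f'' f''' : ℝ → ℝ) (I : Set ℝ)
    (hI : IsOpen I) (hconv : Convex ℝ I)
    (hv : ∀ x ∈ I, HasDerivAt v (v' x) x)
    (hfpos : ∀ x ∈ I, f x > 0)
    (hf1 : ∀ x ∈ I, HasDerivAt f (f' x) x)
    (hf2 : ∀ x ∈ I, HasDerivAt f' (f'' x) x)
    (hf3 : ∀ x ∈ I, HasDerivAt f'' (f''' x) x)
    (heq : ∀ x ∈ I, f''' x + 4 * (v x - β * f x) * f' x
        + 2 * (v' x - β * f' x) * f x + 6 * β * f x * f' x = 0)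
    (ψ : ℝ → ℝ) (hψ : ψ = fun x => Real.sqrt (f x)) :
    (∀ x ∈ I, deriv (fun t => deriv (deriv ψ) t * (ψ t) ^ 3
        + (v t - β * f t) * (ψ t) ^ 4 + β * (ψ t) ^ 6) x = 0) ∧
    (∃ σ : ℝ, ∀ x ∈ I, deriv (deriv ψ) x + (v x - β * f x) * ψ x
        + β * (ψ x) ^ 3 = σ / (ψ x) ^ 3) := by
  subst hψ
  set s : ℝ → ℝ := fun x => Real.sqrt (f x) with hs
  have hspos : ∀ x ∈ I, 0 < s x := fun x hx => Real.sqrt_pos.2 (hfpos x hx)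
  have hsq : ∀ x ∈ I, s x ^ 2 = f x := fun x hx => Real.sq_sqrt (hfpos x hx).le
  -- first derivative of ψ
  have hd1 : ∀ x ∈ I, HasDerivAt s (f' x / (2 * s x)) x := by
    intro x hx
    have h := (Real.hasDerivAt_sqrt (ne_of_gt (hfpos x hx))).comp x (hf1 x hx)
    exact h.congr_deriv (by simp only [hs]; ring)
  have hderiv1 : ∀ x ∈ I, deriv s x = f' x / (2 * s x) := fun x hx => (hd1 x hx).deriv
  -- second derivative of ψ
  set ψ2 : ℝ → ℝ := fun x =>
    (f'' x * (2 * s x) - f' x * (2 * (f' x / (2 * s x)))) / (2 * s x) ^ 2 with hψ2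
  have hd2 : ∀ x ∈ I, HasDerivAt (fun x => f' x / (2 * s x)) (ψ2 x) x := by
    intro x hx
    exact (hf2 x hx).div ((hd1 x hx).const_mul 2)
      (by have := hspos x hx; positivity)
  have hev : ∀ x ∈ I, deriv s =ᶠ[nhds x] fun x => f' x / (2 * s x) := fun x hx =>
    Filter.eventuallyEq_of_mem (hI.mem_nhds hx) fun y hy => hderiv1 y hy
  have hderiv2 : ∀ x ∈ I, deriv (deriv s) x = ψ2 x := fun x hx =>
    ((hev x hx).deriv_eq).trans (hd2 x hx).deriv
  -- conserved quantity in terms of f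
  set E : ℝ → ℝ := fun t => f'' t * f t / 2 - (f' t) ^ 2 / 4 + v t * (f t) ^ 2 with hE
  have hFE : ∀ t ∈ I, deriv (deriv s) t * (s t) ^ 3
      + (v t - β * f t) * (s t) ^ 4 + β * (s t) ^ 6 = E t := by
    intro t ht
    rw [hderiv2 t ht, hψ2, hE]
    have h2 := hsq t ht
    have hne : s t ≠ 0 := ne_of_gt (hspos t ht)
    field_simp
    linear_combination (8 * f'' t + (s t ^ 2 + f t) * (16 * v t) + 16 * s t ^ 4 * β) * h2
  have hEder : ∀ x ∈ I, HasDerivAt E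
      ((f''' x * f x + f'' x * f' x) / 2 - 2 * f' x ^ 1 * f'' x / 4
        + (v' x * f x ^ 2 + v x * (↑2 * f x ^ 1 * f' x))) x := by
    intro x hx
    exact ((((hf3 x hx).mul (hf1 x hx)).div_const 2).sub
      (((hf2 x hx).pow 2).div_const 4)).add ((hv x hx).mul ((hf1 x hx).pow 2))
  have hEval : ∀ x ∈ I, (f''' x * f x + f'' x * f' x) / 2 - 2 * f' x ^ 1 * f'' x / 4
      + (v' x * f x ^ 2 + v x * (↑2 * f x ^ 1 * f' x)) = 0 := by
    intro x hx
    have h := heq x hx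
    linear_combination (f x / 2) * h
  have hEder0 : ∀ x ∈ I, HasDerivAt E 0 x := by
    intro x hx
    have := hEder x hx
    rwa [hEval x hx] at this
  constructor
  · intro x hx
    have hFev : (fun t => deriv (deriv s) t * (s t) ^ 3
        + (v t - β * f t) * (s t) ^ 4 + β * (s t) ^ 6) =ᶠ[nhds x] E :=
      Filter.eventuallyEq_of_mem (hI.mem_nhds hx) fun y hy => hFE y hy
    rw [hFev.deriv_eq, (hEder0 x hx).deriv]
  · rcases Set.eq_empty_or_nonempty I with hIe | ⟨x₀, hx₀⟩
    · exact ⟨0, by simp [hIe]⟩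
    · refine ⟨E x₀, fun x hx => ?_⟩
      have hconst : E x = E x₀ := by
        have h := Convex.norm_image_sub_le_of_norm_hasDerivWithin_le
          (f' := fun _ => (0 : ℝ)) (C := 0)
          (fun y hy => (hEder0 y hy).hasDerivWithinAt)
          (fun y _ => by simp) hconv hx₀ hx
        simp only [zero_mul, Real.norm_eq_abs] at h
        exact sub_eq_zero.mp (abs_eq_zero.mp (le_antisymm h (abs_nonneg _)))
      have hne : s x ≠ 0 := ne_of_gt (hspos x hx)
      rw [eq_div_iff (pow_ne_zero 3 hne)]
      have hfx := hFE x hx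
      rw [hconst] at hfx
      linear_combination hfx
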